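/- Let r ≥ 3 and let T = [m_1, ..., m_r] be an r-tuple of integers with 2 ≤ m_1 ≤ ... ≤ m_r such that Θ(T) > 0, α(T) := 4/Θ(T) is a positive integer, and m_i divides α(T) for all 1 ≤ i ≤ r. Then r ≤ 8. -/

import Mathlib

/-- For a tuple `T = [m₁, ..., m_r]`, `Θ(T) := -2 + ∑ᵢ (1 - 1/mᵢ)` as a rational number. -/
def Theta (T : List ℕ) : ℚ :=
  -2 + (T.map (fun m => 1 - (1 : ℚ) / m)).sum

lemma Theta_eq (T : List ℕ) :
    Theta T = -2 + (T.map (fun m : ℕ => 1 - (1 : ℚ) / (m : ℚ))).sum := by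
  rw [Theta]
  congr 1
  induction T with
  | nil => simp
  | cons x t ih => simp_all

/-- If `T = [m₁, ..., m_r]` with `r ≥ 3`, `2 ≤ m₁ ≤ ... ≤ m_r`, `Θ(T) > 0`,
`α(T) = 4/Θ(T)` is a positive integer `a`, and every `mᵢ` divides `a`, then `r ≤ 8`. -/
theorem length_le_eight_of_type (T : List ℕ)
    (hlen : 3 ≤ T.length)
    (hsort : T.Pairwise (· ≤ ·))
    (htwo : ∀ m ∈ T, 2 ≤ m)
    (hpos : 0 < Theta T)
    (a : ℕ) (hapos : 0 < a)
    (halpha : (a : ℚ) * Theta T = 4)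
    (hdvd : ∀ m ∈ T, m ∣ a) :
    T.length ≤ 8 := by
  -- T is nonempty, get an element m₀ with 2 ≤ m₀ and m₀ ∣ a, hence a ≥ 2
  obtain ⟨m₀, hm₀⟩ : ∃ m, m ∈ T := by
    cases T with
    | nil => simp at hlen
    | cons x t => exact ⟨x, List.mem_cons_self⟩
  have ha2 : 2 ≤ a :=
    le_trans (htwo m₀ hm₀) (Nat.le_of_dvd hapos (hdvd m₀ hm₀))
  -- Θ T ≤ 2
  have hΘ2 : Theta T ≤ 2 := by
    by_contra h
    push_neg at h
    have : (4 : ℚ) < (a : ℚ) * Theta T := by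
      calc (4 : ℚ) = 2 * 2 := by norm_num
      _ ≤ (a : ℚ) * 2 := by
        have : (2 : ℚ) ≤ (a : ℚ) := by exact_mod_cast ha2
        nlinarith
      _ < (a : ℚ) * Theta T := by
        have : (0 : ℚ) < (a : ℚ) := by positivity
        nlinarith
    rw [halpha] at this
    exact lt_irrefl _ this
  -- lower bound: each term ≥ 1/2
  have hterm : ∀ x ∈ T.map (fun m : ℕ => 1 - (1 : ℚ) / (m : ℚ)), (1 : ℚ) / 2 ≤ x := by
    intro x hx
    obtain ⟨m, hmT, rfl⟩ := List.mem_map.mp hx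
    have h2 : (2 : ℚ) ≤ (m : ℚ) := by exact_mod_cast htwo m hmT
    have hm0 : (0 : ℚ) < (m : ℚ) := by linarith
    have : (1 : ℚ) / m ≤ 1 / 2 := by
      apply div_le_div_of_nonneg_left (by norm_num) (by norm_num) h2
    linarith
  have hsum : (T.map (fun m : ℕ => 1 - (1 : ℚ) / (m : ℚ))).length • ((1 : ℚ) / 2) ≤
      (T.map (fun m : ℕ => 1 - (1 : ℚ) / (m : ℚ))).sum :=
    List.card_nsmul_le_sum _ _ hterm
  rw [List.length_map] at hsum
  have hΘ : Theta T = -2 + (T.map (fun m : ℕ => 1 - (1 : ℚ) / (m : ℚ))).sum := by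
    exact Theta_eq T
  have : (T.length : ℚ) * (1 / 2) ≤ (T.map (fun m : ℕ => 1 - (1 : ℚ) / (m : ℚ))).sum := by
    simpa [nsmul_eq_mul] using hsum
  have hfin : (T.length : ℚ) ≤ 8 := by
    rw [hΘ] at hΘ2
    linarith
  exact_mod_cast hfin
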